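/- Let $w \in C^2(\mathbb{R}^n \times \mathbb{R})$ be bounded, and let $h : [0,\infty) \to [0,\infty)$ be continuous with $h(s) > 0$ for $s > 0$. Suppose $w_t - \Delta w \le -h(w)$ pointwise on the open set $W^+ := \{(x,t) : w(x,t) > 0\}$. Then $W^+ = \emptyset$, i.e., $w \le 0$ everywhere. -/

import Mathlib

open Real Set Filter Topology

lemma second_deriv_test_aux {g g' : ℝ → ℝ} {c : ℝ}
    (hd : ∀ s, HasDerivAt g (g' s) s)
    (hd2 : HasDerivAt g' c 0)
    (hmax : ∀ s, g s ≤ g 0) : c ≤ 0 := by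
  have hloc : IsLocalMax g 0 := Filter.Eventually.of_forall hmax
  have hg'0 : g' 0 = 0 := hloc.hasDerivAt_eq_zero (hd 0)
  by_contra hc
  push_neg at hc
  have htend := hasDerivAt_iff_tendsto_slope.mp hd2
  have hev : ∀ᶠ s in 𝓝[≠] (0:ℝ), c/2 < slope g' 0 s :=
    htend.eventually (eventually_gt_nhds (by linarith))
  rw [eventually_nhdsWithin_iff, Metric.eventually_nhds_iff] at hev
  obtain ⟨δ, hδ, hball⟩ := hev
  have hpos : ∀ s ∈ Ioo (0:ℝ) δ, 0 < g' s := by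
    intro s hs
    have h1 : dist s 0 < δ := by
      rw [Real.dist_eq, sub_zero, abs_of_pos hs.1]; exact hs.2
    have h2 := hball h1 (by simp [ne_of_gt hs.1])
    have h3 : slope g' 0 s = g' s / s := by
      simp [slope_def_field, hg'0]
    rw [h3, lt_div_iff₀ hs.1] at h2
    nlinarith [hs.1]
  have hcont : ContinuousOn g (Icc 0 (δ/2)) :=
    fun s _ => ((hd s).continuousAt).continuousWithinAt
  have hmono : StrictMonoOn g (Icc 0 (δ/2)) := by
    apply strictMonoOn_of_deriv_pos (convex_Icc _ _) hcont
    intro s hs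
    rw [interior_Icc] at hs
    rw [(hd s).deriv]
    exact hpos s ⟨hs.1, lt_trans hs.2 (by linarith)⟩
  have := hmono (left_mem_Icc.mpr (by linarith)) (right_mem_Icc.mpr (by linarith)) (by linarith)
  exact absurd (hmax (δ/2)) (not_le.mpr this)

lemma sqrt_deriv_aux (a t : ℝ) :
    HasDerivAt (fun τ : ℝ => Real.sqrt ((τ - a)^2 + 1))
      ((t - a) / Real.sqrt ((t - a)^2 + 1)) t := by
  have hpos : 0 < (t - a)^2 + 1 := by positivity
  have hinner : HasDerivAt (fun τ : ℝ => (τ - a)^2 + 1) (2 * (t - a)) t := by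
    have h1 : HasDerivAt (fun τ : ℝ => (τ - a)) 1 t := (hasDerivAt_id t).sub_const a
    have h2 := (h1.pow 2).add_const 1
    exact h2.congr_deriv (by push_cast; ring)
  have hs := (Real.hasDerivAt_sqrt (ne_of_gt hpos)).comp t hinner
  have hsne : Real.sqrt ((t - a)^2 + 1) ≠ 0 := by positivity
  refine hs.congr_deriv ?_
  field_simp

lemma sqrt_deriv_bound_aux (a t : ℝ) : |(t - a) / Real.sqrt ((t - a)^2 + 1)| ≤ 1 := by
  rw [abs_div, abs_of_nonneg (Real.sqrt_nonneg _)]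
  rw [div_le_one (by positivity)]
  calc |t - a| = Real.sqrt ((t-a)^2) := (Real.sqrt_sq_eq_abs _).symm
  _ ≤ _ := Real.sqrt_le_sqrt (by nlinarith)


set_option maxHeartbeats 2000000

/-- Maximum-principle-type Liouville statement: a bounded `C²` function `w`
on `ℝⁿ × ℝ` satisfying `w_t - Δw ≤ -h(w)` on `{w > 0}`, with `h` continuous,
nonnegative, and positive on `(0,∞)`, must satisfy `w ≤ 0` everywhere. -/
theorem stmt12 (n : ℕ) (w : (Fin n → ℝ) → ℝ → ℝ)
    (hw : ContDiff ℝ 2 (fun q : (Fin n → ℝ) × ℝ => w q.1 q.2))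
    (hbd : ∃ M, ∀ x t, |w x t| ≤ M)
    (h : ℝ → ℝ) (hh : ContinuousOn h (Ici 0))
    (hhnn : ∀ s ≥ (0 : ℝ), 0 ≤ h s)
    (hhpos : ∀ s > (0 : ℝ), 0 < h s)
    (hsub : ∀ x t, 0 < w x t →
      deriv (fun τ => w x τ) t -
        (∑ i : Fin n,
          fderiv ℝ (fun y => fderiv ℝ (fun z => w z t) y (Pi.single i (1 : ℝ))) x
            (Pi.single i (1 : ℝ)))
      ≤ -h (w x t)) :
    ∀ x t, w x t ≤ 0 := by
  by_contra hcon
  push_neg at hcon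
  obtain ⟨x₁, t₁, hx₁⟩ := hcon
  obtain ⟨M, hM⟩ := hbd
  have hM0 : 0 ≤ M := le_trans (abs_nonneg _) (hM x₁ t₁)
  set f : ((Fin n → ℝ) × ℝ) → ℝ := fun q => w q.1 q.2 with hf
  have hbdd : BddAbove (Set.range f) := by
    refine ⟨M, ?_⟩
    rintro y ⟨q, rfl⟩
    exact (abs_le.mp (hM q.1 q.2)).2
  set W := sSup (Set.range f) with hWdef
  have hWpos : 0 < W := lt_of_lt_of_le hx₁ (le_csSup hbdd ⟨(x₁, t₁), rfl⟩)
  have hle_W : ∀ x t, w x t ≤ W := fun x t => le_csSup hbdd ⟨(x, t), rfl⟩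
  obtain ⟨y, ⟨⟨xs, ts⟩, rfl⟩, hy⟩ :=
    exists_lt_of_lt_csSup (Set.range_nonempty f) (by linarith : W/2 < W)
  -- hy : W/2 < f (xs, ts) = w xs ts
  have hWW : W/2 ≤ W := by linarith
  obtain ⟨s₁, hs₁mem, hs₁min⟩ :=
    (isCompact_Icc (a := W/2) (b := W)).exists_isMinOn ⟨W/2, left_mem_Icc.mpr hWW⟩
      (hh.mono (fun s hs => le_trans (by linarith : (0:ℝ) ≤ W/2) hs.1))
  set H := h s₁ with hHdef
  have hHpos : 0 < H := hhpos s₁ (lt_of_lt_of_le (by linarith) hs₁mem.1)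
  set ε := H / (2 * (2 * (n:ℝ) + 1)) with hεdef
  have hεpos : 0 < ε := by positivity
  set F : ((Fin n → ℝ) × ℝ) → ℝ := fun q =>
    w q.1 q.2 - ε * (∑ j, (q.1 j - xs j)^2) - ε * (Real.sqrt ((q.2 - ts)^2 + 1) - 1) with hF
  have hFc : Continuous F := by
    have hc0 : Continuous fun q : (Fin n → ℝ) × ℝ => w q.1 q.2 := hw.continuous
    apply Continuous.sub
    · apply hc0.sub
      exact continuous_const.mul (continuous_finset_sum _ fun j _ =>
        (((continuous_apply j).comp continuous_fst).sub continuous_const).pow 2)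
    · exact continuous_const.mul ((Real.continuous_sqrt.comp
        (((continuous_snd.sub continuous_const).pow 2).add continuous_const)).sub continuous_const)
  have hFst : F (xs, ts) = w xs ts := by
    simp [hF, Real.sqrt_one]
  set c := w xs ts with hcdef
  set S := {q : (Fin n → ℝ) × ℝ | c ≤ F q} with hSdef
  have hSclosed : IsClosed S := isClosed_le continuous_const hFc
  have hpen1 : ∀ q : (Fin n → ℝ) × ℝ, 0 ≤ ∑ j, (q.1 j - xs j)^2 :=
    fun q => Finset.sum_nonneg fun j _ => sq_nonneg _
  have hpen2 : ∀ τ : ℝ, 0 ≤ Real.sqrt ((τ - ts)^2 + 1) - 1 := by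
    intro τ
    have h1 := Real.sq_sqrt (show (0:ℝ) ≤ (τ - ts)^2 + 1 by positivity)
    nlinarith [Real.sqrt_nonneg ((τ - ts)^2 + 1)]
  have hcpos : 0 < c := by linarith
  have hsub_ball : S ⊆ Metric.closedBall (xs, ts) (max (Real.sqrt (M/ε)) (M/ε + 1)) := by
    intro q hq
    have hcq : c ≤ F q := hq
    have hwq : w q.1 q.2 ≤ M := (abs_le.mp (hM _ _)).2
    rw [hF] at hcq
    simp only at hcq
    have h1 : ε * (∑ j, (q.1 j - xs j)^2) ≤ M := by nlinarith [hpen1 q, hpen2 q.2, mul_nonneg hεpos.le (hpen2 q.2)]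
    have h2 : ε * (Real.sqrt ((q.2 - ts)^2 + 1) - 1) ≤ M := by
      nlinarith [hpen1 q, mul_nonneg hεpos.le (hpen1 q)]
    rw [Metric.mem_closedBall, Prod.dist_eq]
    apply max_le
    · apply le_trans _ (le_max_left _ _)
      rw [dist_pi_le_iff (Real.sqrt_nonneg _)]
      intro j
      rw [Real.dist_eq]
      have hj : (q.1 j - xs j)^2 ≤ M/ε := by
        have hsingle : (q.1 j - xs j)^2 ≤ ∑ k, (q.1 k - xs k)^2 :=
          Finset.single_le_sum (f := fun k => (q.1 k - xs k)^2) (fun k _ => sq_nonneg _) (Finset.mem_univ j)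
        rw [le_div_iff₀ hεpos]
        nlinarith
      calc |q.1 j - xs j| = Real.sqrt ((q.1 j - xs j)^2) := (Real.sqrt_sq_eq_abs _).symm
        _ ≤ Real.sqrt (M/ε) := Real.sqrt_le_sqrt hj
    · apply le_trans _ (le_max_right _ _)
      rw [Real.dist_eq]
      have h3 : Real.sqrt ((q.2 - ts)^2 + 1) - 1 ≤ M/ε := by
        rw [← le_div_iff₀' hεpos] at h2; exact h2
      have h4 : |q.2 - ts| ≤ Real.sqrt ((q.2 - ts)^2 + 1) := by
        calc |q.2 - ts| = Real.sqrt ((q.2 - ts)^2) := (Real.sqrt_sq_eq_abs _).symm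
          _ ≤ _ := Real.sqrt_le_sqrt (by nlinarith)
      linarith
  have hScompact : IsCompact S :=
    (isCompact_closedBall _ _).of_isClosed_subset hSclosed hsub_ball
  have hSne : S.Nonempty := ⟨(xs, ts), by simp only [hSdef, mem_setOf_eq, hFst]; exact le_refl _⟩
  obtain ⟨q₀, hq₀S, hq₀max⟩ := hScompact.exists_isMaxOn hSne hFc.continuousOn
  have hglobal : ∀ q, F q ≤ F q₀ := by
    intro q
    by_cases hqS : q ∈ S
    · exact hq₀max hqS
    · have h1 : F q < c := not_le.mp hqS
      exact le_trans h1.le hq₀S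
  obtain ⟨x₀, t₀⟩ := q₀
  have hcF : c ≤ F (x₀, t₀) := hq₀S
  have hFle : F (x₀, t₀) ≤ w x₀ t₀ := by
    have := hpen1 (x₀, t₀)
    have := hpen2 t₀
    simp only [hF]
    nlinarith [mul_nonneg hεpos.le (hpen1 (x₀, t₀)), mul_nonneg hεpos.le (hpen2 t₀)]
  have hw₀ : W/2 < w x₀ t₀ := by
    calc W/2 < c := hy
    _ ≤ F (x₀, t₀) := hcF
    _ ≤ w x₀ t₀ := hFle
  -- smoothness of slices
  have hGt : ∀ t : ℝ, ContDiff ℝ 2 (fun z => w z t) := fun t =>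
    hw.comp (contDiff_id.prodMk contDiff_const)
  have hWx : ∀ x, ContDiff ℝ 2 (fun τ => w x τ) := fun x =>
    hw.comp (contDiff_const.prodMk contDiff_id)
  -- time direction
  set A := ∑ j, (x₀ j - xs j)^2 with hA
  set dwt := deriv (fun τ => w x₀ τ) t₀ with hdwt
  have hdw : HasDerivAt (fun τ => w x₀ τ) dwt t₀ :=
    (((hWx x₀).differentiable (by norm_num)) t₀).hasDerivAt
  set k : ℝ → ℝ := fun τ => w x₀ τ - ε*A - ε*(Real.sqrt ((τ - ts)^2+1) - 1) with hk
  have hmaxk : ∀ τ, k τ ≤ k t₀ := fun τ => hglobal (x₀, τ)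
  have hkD : HasDerivAt k (dwt - ε * ((t₀ - ts)/Real.sqrt ((t₀-ts)^2+1))) t₀ :=
    (hdw.sub_const (ε*A)).sub (((sqrt_deriv_aux ts t₀).sub_const 1).const_mul ε)
  have hlmk : IsLocalMax k t₀ := Filter.Eventually.of_forall hmaxk
  have hk0 : dwt - ε * ((t₀ - ts)/Real.sqrt ((t₀-ts)^2+1)) = 0 :=
    hlmk.hasDerivAt_eq_zero hkD
  have hdwt_ge : -ε ≤ dwt := by
    have hb := abs_le.mp (sqrt_deriv_bound_aux ts t₀)
    nlinarith [hb.1, hb.2]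
  -- space directions
  have hspace : ∀ i : Fin n,
      fderiv ℝ (fun y => fderiv ℝ (fun z => w z t₀) y (Pi.single i (1:ℝ))) x₀
        (Pi.single i (1:ℝ)) ≤ 2 * ε := by
    intro i
    set v : Fin n → ℝ := Pi.single i (1:ℝ) with hv
    set L : ℝ → (Fin n → ℝ) := fun s => x₀ + s • v with hL
    have hL0 : L 0 = x₀ := by simp [hL]
    have hLd : ∀ s, HasDerivAt L v s := by
      intro s
      have h1 := ((hasDerivAt_id s).smul_const v).const_add x₀
      exact h1.congr_deriv (one_smul _ _)
    have hG : ContDiff ℝ 2 (fun z => w z t₀) := hGt t₀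
    have hGd : Differentiable ℝ (fun z => w z t₀) := hG.differentiable (by norm_num)
    set Φ : (Fin n → ℝ) → ℝ := fun y => fderiv ℝ (fun z => w z t₀) y v with hΦ
    have hΦd : Differentiable ℝ Φ := by
      have h1 : ContDiff ℝ 1 (fderiv ℝ (fun z => w z t₀)) := hG.fderiv_right (by norm_num)
      exact (h1.clm_apply contDiff_const).differentiable (by norm_num)
    have hwl : ∀ s, HasDerivAt (fun s => w (L s) t₀) (Φ (L s)) s := fun s =>
      ((hGd (L s)).hasFDerivAt).comp_hasDerivAt s (hLd s)
    have hΦl : HasDerivAt (fun s => Φ (L s)) (fderiv ℝ Φ x₀ v) 0 := by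
      have h1 := ((hΦd (L 0)).hasFDerivAt).comp_hasDerivAt 0 (hLd 0)
      rw [hL0] at h1
      exact h1
    set C := ∑ j ∈ Finset.univ.erase i, (x₀ j - xs j)^2 with hC
    have hsum : ∀ s, ∑ j, (L s j - xs j)^2 = (x₀ i + s - xs i)^2 + C := by
      intro s
      rw [← Finset.add_sum_erase _ _ (Finset.mem_univ i)]
      congr 1
      · simp [hL, hv]
      · apply Finset.sum_congr rfl
        intro j hj
        have hji : j ≠ i := Finset.ne_of_mem_erase hj
        simp [hL, hv, Pi.single_eq_of_ne hji]
    set gg : ℝ → ℝ := fun s =>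
      w (L s) t₀ - ε * ((x₀ i + s - xs i)^2 + C) - ε*(Real.sqrt ((t₀ - ts)^2+1) - 1) with hgg
    have hmaxg : ∀ s, gg s ≤ gg 0 := by
      intro s
      have h1 := hglobal (L s, t₀)
      have e1 : F (L s, t₀) = gg s := by
        simp only [hF, hgg]
        rw [hsum s]
      have e2 : F (x₀, t₀) = gg 0 := by
        have h0 := hsum 0
        rw [hL0] at h0
        simp only [hF, hgg]
        rw [hL0, h0]
      rw [e1, e2] at h1
      exact h1
    set gg' : ℝ → ℝ := fun s => Φ (L s) - ε * (2 * (x₀ i + s - xs i)) with hgg'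
    have hggd : ∀ s, HasDerivAt gg (gg' s) s := by
      intro s
      have h1 : HasDerivAt (fun s : ℝ => x₀ i + s - xs i) 1 s :=
        ((hasDerivAt_id s).const_add (x₀ i)).sub_const (xs i)
      have hpoly : HasDerivAt (fun s : ℝ => (x₀ i + s - xs i)^2 + C) (2*(x₀ i + s - xs i)) s := by
        have h2 := (h1.pow 2).add_const C
        exact h2.congr_deriv (by push_cast; ring)
      exact ((hwl s).sub (hpoly.const_mul ε)).sub_const _
    have hgg2 : HasDerivAt gg' (fderiv ℝ Φ x₀ v - ε * 2) 0 := by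
      have h1 : HasDerivAt (fun s : ℝ => x₀ i + s - xs i) 1 0 :=
        ((hasDerivAt_id 0).const_add (x₀ i)).sub_const (xs i)
      have h2 : HasDerivAt (fun s : ℝ => ε * (2 * (x₀ i + s - xs i))) (ε * 2) 0 := by
        have h3 := (h1.const_mul (2:ℝ)).const_mul ε
        exact h3.congr_deriv (by ring)
      exact hΦl.sub h2
    have hfinal := second_deriv_test_aux hggd hgg2 hmaxg
    linarith
  have hsumD : (∑ i : Fin n,
      fderiv ℝ (fun y => fderiv ℝ (fun z => w z t₀) y (Pi.single i (1:ℝ))) x₀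
        (Pi.single i (1:ℝ))) ≤ (n:ℝ) * (2*ε) := by
    calc (∑ i : Fin n, fderiv ℝ (fun y => fderiv ℝ (fun z => w z t₀) y (Pi.single i (1:ℝ))) x₀
        (Pi.single i (1:ℝ))) ≤ ∑ _i : Fin n, 2*ε :=
          Finset.sum_le_sum (fun i _ => hspace i)
    _ = (n:ℝ) * (2*ε) := by simp [Finset.sum_const, mul_comm]
  have hsub₀ := hsub x₀ t₀ (by linarith : 0 < w x₀ t₀)
  rw [← hdwt] at hsub₀
  have hhge : H ≤ h (w x₀ t₀) := hs₁min ⟨le_of_lt hw₀, hle_W x₀ t₀⟩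
  have hεval : ε * (2*(n:ℝ)+1) = H/2 := by
    rw [hεdef]
    field_simp
  nlinarith [hsub₀, hsumD, hdwt_ge, hhge, hεval, hHpos]
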